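/- In a standard probability space (X, μ), for every finite measurable partition (A₁,…,A_k) into positive measure sets and every positive measure set E ⊆ X, the set of tuples (B₁,…,B_k) forming a measurable partition with μ(Bᵢ) = μ(Aᵢ) for all i and μ(Bᵢ ∩ E) = 0 for a fixed i is closed and nowhere dense in the space of all such partitions, where the metric on partitions is d((Bᵢ),(Bᵢ')) = maxᵢ μ(Bᵢ Δ Bᵢ'). -/

import Mathlib

open MeasureTheory

/-- In a standard probability space, among partitions `(B i)` with prescribed measures
`μ(B i) = μ(A i)`, the set of partitions with `μ(B i₀ ∩ E) = 0` (for a fixed positive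
measure set `E` and index `i₀`) is closed with empty interior (hence nowhere dense)
with respect to the metric `d(B, B') = max_i μ(B i Δ B' i)`. -/
theorem avoiding_set_nowhere_dense {X : Type*} [MeasurableSpace X] (μ : Measure X)
    [IsProbabilityMeasure μ]
    (hdiv : ∀ (s : Set X) (r : ENNReal), MeasurableSet s → r ≤ μ s →
      ∃ t ⊆ s, MeasurableSet t ∧ μ t = r)
    (k : ℕ) (A : Fin k → Set X) (hAmeas : ∀ i, MeasurableSet (A i))
    (hAdisj : Pairwise (Function.onFun Disjoint A)) (hAcover : ⋃ i, A i = Set.univ)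
    (hApos : ∀ i, 0 < μ (A i))
    (E : Set X) (hEmeas : MeasurableSet E) (hEpos : 0 < μ E)
    (i₀ : Fin k) :
    -- the set is closed in the space of partitions:
    (∀ B : Fin k → Set X,
      ((∀ i, MeasurableSet (B i)) ∧ Pairwise (Function.onFun Disjoint B) ∧
        (⋃ i, B i = Set.univ) ∧ (∀ i, μ (B i) = μ (A i))) →
      (∀ ε > (0 : ℝ), ∃ B' : Fin k → Set X,
        ((∀ i, MeasurableSet (B' i)) ∧ Pairwise (Function.onFun Disjoint B') ∧
          (⋃ i, B' i = Set.univ) ∧ (∀ i, μ (B' i) = μ (A i))) ∧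
        μ (B' i₀ ∩ E) = 0 ∧ (⨆ i, (μ (symmDiff (B i) (B' i))).toReal) < ε) →
      μ (B i₀ ∩ E) = 0) ∧
    -- and has empty interior (so, being closed, it is nowhere dense):
    (∀ B : Fin k → Set X,
      ((∀ i, MeasurableSet (B i)) ∧ Pairwise (Function.onFun Disjoint B) ∧
        (⋃ i, B i = Set.univ) ∧ (∀ i, μ (B i) = μ (A i))) →
      ∀ ε > (0 : ℝ), ∃ B' : Fin k → Set X,
        ((∀ i, MeasurableSet (B' i)) ∧ Pairwise (Function.onFun Disjoint B') ∧
          (⋃ i, B' i = Set.univ) ∧ (∀ i, μ (B' i) = μ (A i))) ∧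
        (⨆ i, (μ (symmDiff (B i) (B' i))).toReal) < ε ∧
        μ (B' i₀ ∩ E) ≠ 0) := by
  haveI : Nonempty (Fin k) := ⟨i₀⟩
  constructor
  · -- closedness
    rintro B ⟨hBmeas, hBdisj, hBcover, hBmeasEq⟩ happrox
    by_contra h0
    have hpos : 0 < (μ (B i₀ ∩ E)).toReal :=
      ENNReal.toReal_pos h0 (measure_ne_top μ _)
    obtain ⟨B', hB', hB'E, hsup⟩ := happrox _ hpos
    have hsub : B i₀ ∩ E ⊆ (B' i₀ ∩ E) ∪ symmDiff (B i₀) (B' i₀) := by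
      intro x hx
      by_cases hxB : x ∈ B' i₀
      · exact Or.inl ⟨hxB, hx.2⟩
      · exact Or.inr (Or.inl ⟨hx.1, hxB⟩)
    have hle : μ (B i₀ ∩ E) ≤ μ (symmDiff (B i₀) (B' i₀)) := by
      calc μ (B i₀ ∩ E) ≤ μ ((B' i₀ ∩ E) ∪ symmDiff (B i₀) (B' i₀)) := measure_mono hsub
        _ ≤ μ (B' i₀ ∩ E) + μ (symmDiff (B i₀) (B' i₀)) := measure_union_le _ _
        _ = μ (symmDiff (B i₀) (B' i₀)) := by rw [hB'E, zero_add]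
    have hleR : (μ (B i₀ ∩ E)).toReal ≤ (μ (symmDiff (B i₀) (B' i₀))).toReal :=
      ENNReal.toReal_mono (measure_ne_top μ _) hle
    have hmem : (μ (symmDiff (B i₀) (B' i₀))).toReal ≤
        ⨆ i, (μ (symmDiff (B i) (B' i))).toReal :=
      le_ciSup (f := fun i => (μ (symmDiff (B i) (B' i))).toReal)
        (Set.Finite.bddAbove (Set.finite_range _)) i₀
    linarith
  · -- empty interior
    rintro B ⟨hBmeas, hBdisj, hBcover, hBmeasEq⟩ ε hε
    by_cases hBE : μ (B i₀ ∩ E) = 0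
    · -- find j ≠ i₀ with μ (B j ∩ E) > 0
      have hcover : (⋃ i, B i ∩ E) = E := by
        rw [← Set.iUnion_inter, hBcover, Set.univ_inter]
      have hex : ∃ j, μ (B j ∩ E) ≠ 0 := by
        by_contra hall
        push_neg at hall
        have : μ E = 0 := by
          rw [← hcover]
          exact le_antisymm (le_trans (measure_iUnion_le _) (by simp [hall])) zero_le
        exact hEpos.ne' this
      obtain ⟨j, hj⟩ := hex
      have hji : j ≠ i₀ := by rintro rfl; exact hj hBE
      have hjpos : 0 < μ (B j ∩ E) := pos_iff_ne_zero.mpr hj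
      have hBi0diff : μ (B i₀ \ E) = μ (B i₀) := by
        have h1 : μ (B i₀ ∩ E) + μ (B i₀ \ E) = μ (B i₀) :=
          measure_inter_add_diff (B i₀) hEmeas
        rw [hBE, zero_add] at h1; exact h1
      have hi0pos : 0 < μ (B i₀ \ E) := by
        rw [hBi0diff, hBmeasEq]; exact hApos i₀
      set r : ENNReal := min (min (μ (B j ∩ E)) (μ (B i₀ \ E))) (ENNReal.ofReal (ε/4))
        with hr
      have hrpos : 0 < r :=
        lt_min (lt_min hjpos hi0pos) (ENNReal.ofReal_pos.mpr (by linarith))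
      obtain ⟨S, hSsub, hSmeas, hSr⟩ := hdiv (B j ∩ E) r ((hBmeas j).inter hEmeas)
        (le_trans (min_le_left _ _) (min_le_left _ _))
      obtain ⟨T, hTsub, hTmeas, hTr⟩ := hdiv (B i₀ \ E) r ((hBmeas i₀).diff hEmeas)
        (le_trans (min_le_left _ _) (min_le_right _ _))
      have hSj : S ⊆ B j := hSsub.trans Set.inter_subset_left
      have hTi : T ⊆ B i₀ := hTsub.trans Set.diff_subset
      have hD : ∀ {l m : Fin k}, l ≠ m → Disjoint (B l) (B m) := fun h => hBdisj h
      set B' : Fin k → Set X := fun i =>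
        if i = i₀ then (B i₀ \ T) ∪ S else if i = j then (B j \ S) ∪ T else B i with hB'
      have hB'i0 : B' i₀ = (B i₀ \ T) ∪ S := by simp [hB']
      have hB'j : B' j = (B j \ S) ∪ T := by simp [hB', hji]
      have hB'other : ∀ i, i ≠ i₀ → i ≠ j → B' i = B i := by
        intro i h1 h2; simp [hB', h1, h2]
      have hB'meas : ∀ i, MeasurableSet (B' i) := by
        intro i
        by_cases h1 : i = i₀
        · rw [h1, hB'i0]; exact ((hBmeas i₀).diff hTmeas).union hSmeas
        by_cases h2 : i = j
        · rw [h2, hB'j]; exact ((hBmeas j).diff hSmeas).union hTmeas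
        · rw [hB'other i h1 h2]; exact hBmeas i
      -- key subsets: B' i₀ ⊆ B i₀ ∪ B j, B' j ⊆ B i₀ ∪ B j
      have hsub0 : B' i₀ ⊆ B i₀ ∪ B j := by
        rw [hB'i0]
        exact Set.union_subset (Set.diff_subset.trans Set.subset_union_left)
          (hSj.trans Set.subset_union_right)
      have hsubj : B' j ⊆ B i₀ ∪ B j := by
        rw [hB'j]
        exact Set.union_subset (Set.diff_subset.trans Set.subset_union_right)
          (hTi.trans Set.subset_union_left)
      have hdisj0j : Disjoint (B' i₀) (B' j) := by
        rw [hB'i0, hB'j]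
        apply Set.disjoint_union_left.mpr
        constructor
        · apply Set.disjoint_union_right.mpr
          constructor
          · exact (hD (Ne.symm hji)).mono Set.diff_subset Set.diff_subset
          · exact Set.disjoint_sdiff_left
        · apply Set.disjoint_union_right.mpr
          constructor
          · exact Set.disjoint_sdiff_left.symm
          · exact (hD (Ne.symm hji)).mono hTi hSj |>.symm
      have hdisjOther : ∀ m, m ≠ i₀ → m ≠ j →
          Disjoint (B' i₀) (B' m) ∧ Disjoint (B' j) (B' m) := by
        intro m hm1 hm2
        rw [hB'other m hm1 hm2]
        constructor
        · exact Disjoint.mono_left hsub0 (Set.disjoint_union_left.mpr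
            ⟨hD (fun h => hm1 h.symm), hD (fun h => hm2 h.symm)⟩)
        · exact Disjoint.mono_left hsubj (Set.disjoint_union_left.mpr
            ⟨hD (fun h => hm1 h.symm), hD (fun h => hm2 h.symm)⟩)
      have hB'disj : Pairwise (Function.onFun Disjoint B') := by
        intro l m hlm
        show Disjoint (B' l) (B' m)
        by_cases hl1 : l = i₀
        · rw [hl1]
          by_cases hm2 : m = j
          · rw [hm2]; exact hdisj0j
          · exact (hdisjOther m (fun h => hlm (hl1.trans h.symm)) hm2).1
        by_cases hl2 : l = j
        · rw [hl2]
          by_cases hm1 : m = i₀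
          · rw [hm1]; exact hdisj0j.symm
          · exact (hdisjOther m hm1 (fun h => hlm (hl2.trans h.symm))).2
        · by_cases hm1 : m = i₀
          · rw [hm1]; exact (hdisjOther l hl1 hl2).1.symm
          by_cases hm2 : m = j
          · rw [hm2]; exact (hdisjOther l hl1 hl2).2.symm
          · rw [hB'other l hl1 hl2, hB'other m hm1 hm2]; exact hD hlm
      have hB'cover : ⋃ i, B' i = Set.univ := by
        rw [← hBcover]
        apply Set.Subset.antisymm
        · apply Set.iUnion_subset
          intro i
          by_cases h1 : i = i₀
          · rw [h1]; exact hsub0.trans (Set.union_subset (Set.subset_iUnion B i₀)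
              (Set.subset_iUnion B j))
          by_cases h2 : i = j
          · rw [h2]; exact hsubj.trans (Set.union_subset (Set.subset_iUnion B i₀)
              (Set.subset_iUnion B j))
          · rw [hB'other i h1 h2]; exact Set.subset_iUnion B i
        · apply Set.iUnion_subset
          intro i x hx
          by_cases h1 : i = i₀
          · rw [h1] at hx
            by_cases hxT : x ∈ T
            · exact Set.mem_iUnion.mpr ⟨j, by rw [hB'j]; exact Or.inr hxT⟩
            · exact Set.mem_iUnion.mpr ⟨i₀, by rw [hB'i0]; exact Or.inl ⟨hx, hxT⟩⟩
          by_cases h2 : i = j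
          · rw [h2] at hx
            by_cases hxS : x ∈ S
            · exact Set.mem_iUnion.mpr ⟨i₀, by rw [hB'i0]; exact Or.inr hxS⟩
            · exact Set.mem_iUnion.mpr ⟨j, by rw [hB'j]; exact Or.inl ⟨hx, hxS⟩⟩
          · exact Set.mem_iUnion.mpr ⟨i, by rw [hB'other i h1 h2]; exact hx⟩
      have hSTr : μ S = μ T := by rw [hSr, hTr]
      have hμi0 : μ (B' i₀) = μ (B i₀) := by
        rw [hB'i0, measure_union ((hD (Ne.symm hji)).mono Set.diff_subset hSj) hSmeas,
          hSTr]
        have := measure_inter_add_diff (μ := μ) (B i₀) hTmeas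
        rw [Set.inter_eq_self_of_subset_right hTi] at this
        rw [add_comm] at this
        exact this
      have hμj : μ (B' j) = μ (B j) := by
        rw [hB'j, measure_union ((hD hji).mono Set.diff_subset hTi) hTmeas, ← hSTr]
        have := measure_inter_add_diff (μ := μ) (B j) hSmeas
        rw [Set.inter_eq_self_of_subset_right hSj] at this
        rw [add_comm] at this
        exact this
      have hB'measEq : ∀ i, μ (B' i) = μ (A i) := by
        intro i
        by_cases h1 : i = i₀
        · rw [h1, hμi0]; exact hBmeasEq i₀
        by_cases h2 : i = j
        · rw [h2, hμj]; exact hBmeasEq j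
        · rw [hB'other i h1 h2]; exact hBmeasEq i
      -- symmetric differences are small
      have hr4 : r ≤ ENNReal.ofReal (ε/4) := min_le_right _ _
      have hsymm : ∀ i, (μ (symmDiff (B i) (B' i))).toReal ≤ ε/2 := by
        intro i
        by_cases h1 : i = i₀
        · rw [h1]
          have hsub : symmDiff (B i₀) (B' i₀) ⊆ S ∪ T := by
            rw [hB'i0]
            intro x hx
            rcases hx with ⟨hx1, hx2⟩ | ⟨hx1, hx2⟩
            · right
              by_contra hxT
              exact hx2 (Or.inl ⟨hx1, hxT⟩)
            · rcases hx1 with ⟨h, _⟩ | h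
              · exact absurd h hx2
              · exact Or.inl h
          calc (μ (symmDiff (B i₀) (B' i₀))).toReal
              ≤ (μ (S ∪ T)).toReal :=
                ENNReal.toReal_mono (measure_ne_top μ _) (measure_mono hsub)
            _ ≤ (μ S + μ T).toReal := by
                apply ENNReal.toReal_mono
                · exact ENNReal.add_ne_top.mpr ⟨measure_ne_top μ _, measure_ne_top μ _⟩
                · exact measure_union_le _ _
            _ ≤ (ENNReal.ofReal (ε/4) + ENNReal.ofReal (ε/4)).toReal := by
                apply ENNReal.toReal_mono
                · simp [ENNReal.add_ne_top, ENNReal.ofReal_ne_top]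
                · rw [hSr, hTr]; exact add_le_add hr4 hr4
            _ ≤ ε/2 := by
                rw [← ENNReal.ofReal_add (by linarith) (by linarith),
                  ENNReal.toReal_ofReal (by linarith)]
                linarith
        by_cases h2 : i = j
        · rw [h2]
          have hsub : symmDiff (B j) (B' j) ⊆ S ∪ T := by
            rw [hB'j]
            intro x hx
            rcases hx with ⟨hx1, hx2⟩ | ⟨hx1, hx2⟩
            · left
              by_contra hxS
              exact hx2 (Or.inl ⟨hx1, hxS⟩)
            · rcases hx1 with ⟨h, _⟩ | h
              · exact absurd h hx2
              · exact Or.inr h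
          calc (μ (symmDiff (B j) (B' j))).toReal
              ≤ (μ (S ∪ T)).toReal :=
                ENNReal.toReal_mono (measure_ne_top μ _) (measure_mono hsub)
            _ ≤ (μ S + μ T).toReal := by
                apply ENNReal.toReal_mono
                · exact ENNReal.add_ne_top.mpr ⟨measure_ne_top μ _, measure_ne_top μ _⟩
                · exact measure_union_le _ _
            _ ≤ (ENNReal.ofReal (ε/4) + ENNReal.ofReal (ε/4)).toReal := by
                apply ENNReal.toReal_mono
                · simp [ENNReal.add_ne_top, ENNReal.ofReal_ne_top]
                · rw [hSr, hTr]; exact add_le_add hr4 hr4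
            _ ≤ ε/2 := by
                rw [← ENNReal.ofReal_add (by linarith) (by linarith),
                  ENNReal.toReal_ofReal (by linarith)]
                linarith
        · rw [hB'other i h1 h2]
          simp [symmDiff_self]
          linarith
      have hsupE : (⨆ i, (μ (symmDiff (B i) (B' i))).toReal) < ε :=
        lt_of_le_of_lt (ciSup_le hsymm) (by linarith)
      have hB'E : μ (B' i₀ ∩ E) ≠ 0 := by
        have hSE : S ⊆ B' i₀ ∩ E := by
          intro x hxS
          exact ⟨by rw [hB'i0]; exact Or.inr hxS, (hSsub hxS).2⟩
        intro h
        have : μ S = 0 := measure_mono_null hSE h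
        rw [hSr] at this
        exact hrpos.ne' this
      exact ⟨B', ⟨hB'meas, hB'disj, hB'cover, hB'measEq⟩, hsupE, hB'E⟩
    · exact ⟨B, ⟨hBmeas, hBdisj, hBcover, hBmeasEq⟩, by
        calc (⨆ i, (μ (symmDiff (B i) (B i))).toReal) ≤ 0 :=
            ciSup_le (fun i => by simp [symmDiff_self])
          _ < ε := hε, hBE⟩
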